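/- Let g > 0 and h ≠ 0 be real numbers, and let P : ℝ → ℝ be a twice differentiable function, not identically zero, satisfying P''(α) + (g² − 4h²·cos²α)·P(α) = 0 for all α and P(0) = 0. Then P(α) ≠ 0 for every α in the half-open interval (0, π/g]; i.e., the zeros of P are strictly larger than the corresponding zeros of sin(gα). -/

import Mathlib

open Real
open Set


lemma angular_uniq (g h : ℝ) (P : ℝ → ℝ)
    (hP : Differentiable ℝ P) (hP' : Differentiable ℝ (deriv P))
    (hode : ∀ α : ℝ,
      deriv (deriv P) α + (g ^ 2 - 4 * h ^ 2 * Real.cos α ^ 2) * P α = 0)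
    (c : ℝ) (hc : P c = 0) (hc' : deriv P c = 0) : ∀ x, P x = 0 := by
  set q : ℝ → ℝ := fun t => g ^ 2 - 4 * h ^ 2 * Real.cos t ^ 2 with hq
  set K : NNReal := ⟨g ^ 2 + 4 * h ^ 2 + 1, by positivity⟩ with hK
  have hKr : (K : ℝ) = g ^ 2 + 4 * h ^ 2 + 1 := rfl
  set v : ℝ → ℝ × ℝ → ℝ × ℝ := fun t p => (p.2, -(q t) * p.1) with hv
  have hqbound : ∀ t, |q t| ≤ (K : ℝ) := by
    intro t
    have h1 : Real.cos t ^ 2 ≤ 1 := by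
      have := Real.neg_one_le_cos t; have := Real.cos_le_one t; nlinarith
    have h2 : 0 ≤ Real.cos t ^ 2 := sq_nonneg _
    rw [abs_le, hKr]
    constructor <;> simp only [hq] <;> nlinarith [sq_nonneg h, sq_nonneg g]
  have hK1 : (1:ℝ) ≤ K := by rw [hKr]; nlinarith [sq_nonneg g, sq_nonneg h]
  have hlip : ∀ t, LipschitzWith K (v t) := by
    intro t
    apply LipschitzWith.of_dist_le_mul
    intro p r
    have hd1 : (0:ℝ) ≤ dist p.1 r.1 := dist_nonneg
    rw [Prod.dist_eq, Prod.dist_eq, max_le_iff]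
    constructor
    · calc dist (v t p).1 (v t r).1 = dist p.2 r.2 := rfl
        _ ≤ max (dist p.1 r.1) (dist p.2 r.2) := le_max_right _ _
        _ ≤ K * max (dist p.1 r.1) (dist p.2 r.2) :=
            le_mul_of_one_le_left (le_trans dist_nonneg (le_max_right _ _)) hK1
    · calc dist (v t p).2 (v t r).2 = |q t| * dist p.1 r.1 := by
            simp only [hv, Real.dist_eq, ← mul_sub, abs_mul, abs_neg]
        _ ≤ K * dist p.1 r.1 := mul_le_mul_of_nonneg_right (hqbound t) hd1
        _ ≤ K * max (dist p.1 r.1) (dist p.2 r.2) := by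
            apply mul_le_mul_of_nonneg_left (le_max_left _ _); positivity
  intro x
  set F : ℝ → ℝ × ℝ := fun t => (P t, deriv P t) with hF
  set G : ℝ → ℝ × ℝ := fun _ => ((0:ℝ), (0:ℝ)) with hG
  have hF' : ∀ t, HasDerivAt F (v t (F t)) t := by
    intro t
    have h1 : HasDerivAt P (deriv P t) t := (hP t).hasDerivAt
    have he : deriv (deriv P) t = -(q t) * P t := by have := hode t; simp only [hq]; linarith
    have h2 : HasDerivAt (deriv P) (-(q t) * P t) t := he ▸ (hP' t).hasDerivAt
    exact h1.prodMk h2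
  have hG' : ∀ t, HasDerivAt G (v t (G t)) t := by
    intro t
    simpa [hv, hG, Prod.mk_zero_zero] using (hasDerivAt_const t ((0:ℝ), (0:ℝ)))
  have key : EqOn F G (Icc (min c x - 1) (max c x + 1)) := by
    apply ODE_solution_unique_of_mem_Icc (s := fun _ => (univ : Set (ℝ × ℝ)))
      (fun t _ => (hlip t).lipschitzOnWith)
      (t₀ := c)
    · constructor
      · have := min_le_left c x; linarith
      · have := le_max_left c x; linarith
    · exact ((hP.continuous.prodMk hP'.continuous)).continuousOn
    · exact fun t _ => hF' t
    · exact fun t _ => trivial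
    · exact continuousOn_const
    · exact fun t _ => hG' t
    · exact fun t _ => trivial
    · simp [hF, hG, hc, hc']
  have hx : x ∈ Icc (min c x - 1) (max c x + 1) := by
    constructor
    · have := min_le_right c x; linarith
    · have := le_max_right c x; linarith
  have := key hx
  rw [Prod.ext_iff] at this; simpa [hF, hG] using this.1

lemma angular_key (g h : ℝ) (hg : 0 < g) (hh : h ≠ 0) (P : ℝ → ℝ)
    (hP : Differentiable ℝ P) (hP' : Differentiable ℝ (deriv P))
    (hode : ∀ α : ℝ,
      deriv (deriv P) α + (g ^ 2 - 4 * h ^ 2 * Real.cos α ^ 2) * P α = 0)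
    (β : ℝ) (hβ0 : 0 < β) (hβπ : β ≤ π / g)
    (hpos : ∀ x ∈ Ioo 0 β, 0 < P x) (h0 : P 0 = 0) (hβ : P β = 0) : False := by
  have hπ := Real.pi_pos
  set W : ℝ → ℝ := fun α => deriv P α * Real.sin (g * α) - P α * (g * Real.cos (g * α)) with hWdef
  set D : ℝ → ℝ := fun α => 4 * h ^ 2 * Real.cos α ^ 2 * (P α * Real.sin (g * α)) with hDdef
  -- derivative of W
  have hW' : ∀ α, HasDerivAt W (D α) α := by
    intro α
    have hga : HasDerivAt (fun x : ℝ => g * x) (g * 1) α := (hasDerivAt_id α).const_mul g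
    have hsin : HasDerivAt (fun x : ℝ => Real.sin (g * x)) (Real.cos (g * α) * (g * 1)) α :=
      hga.sin
    have hcos : HasDerivAt (fun x : ℝ => Real.cos (g * x)) (-Real.sin (g * α) * (g * 1)) α :=
      hga.cos
    have h1 : HasDerivAt (fun x => deriv P x * Real.sin (g * x))
        (deriv (deriv P) α * Real.sin (g * α) + deriv P α * (Real.cos (g * α) * (g * 1))) α :=
      ((hP' α).hasDerivAt).mul hsin
    have h2 : HasDerivAt (fun x => P x * (g * Real.cos (g * x)))
        (deriv P α * (g * Real.cos (g * α)) + P α * (g * (-Real.sin (g * α) * (g * 1)))) α :=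
      ((hP α).hasDerivAt).mul (hcos.const_mul g)
    have h3 : HasDerivAt W _ α := h1.sub h2
    convert h3 using 1
    have hα := hode α
    simp only [hDdef]
    linear_combination (-Real.sin (g * α)) * hα
  have hWderiv : ∀ α, deriv W α = D α := fun α => (hW' α).deriv
  -- sign facts
  have hsinpos : ∀ x ∈ Ioo 0 β, 0 < Real.sin (g * x) := by
    intro x hx
    apply Real.sin_pos_of_pos_of_lt_pi (by nlinarith [hx.1])
    have : g * x < g * β := by nlinarith [hx.2]
    have : g * β ≤ π := by
      rw [le_div_iff₀ hg] at hβπ; linarith [hβπ]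
    linarith
  have hground : g * β ≤ π := by rw [le_div_iff₀ hg] at hβπ; linarith
  have hDnonneg : ∀ x ∈ Ioo 0 β, 0 ≤ D x := by
    intro x hx
    have := hpos x hx
    have := hsinpos x hx
    simp only [hDdef]
    positivity
  -- W monotone on [0, β]
  have hWmono : MonotoneOn W (Icc 0 β) := by
    apply monotoneOn_of_deriv_nonneg (convex_Icc 0 β)
    · exact (Continuous.continuousOn (by
        have : Continuous W := by
          apply Continuous.sub
          · exact hP'.continuous.mul (Real.continuous_sin.comp (continuous_const.mul continuous_id))
          · exact hP.continuous.mul (continuous_const.mul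
              (Real.continuous_cos.comp (continuous_const.mul continuous_id)))
        exact this))
    · intro x hx
      exact ((hW' x).differentiableAt).differentiableWithinAt
    · intro x hx
      rw [interior_Icc] at hx
      rw [hWderiv]
      exact hDnonneg x hx
  -- W 0 = 0
  have hW0 : W 0 = 0 := by simp [hWdef, h0]
  -- W β ≤ 0
  have hsinβ : 0 ≤ Real.sin (g * β) := Real.sin_nonneg_of_nonneg_of_le_pi (by positivity) hground
  have hdPβ : deriv P β ≤ 0 := by
    have hd : HasDerivAt P (deriv P β) β := (hP β).hasDerivAt
    rw [hasDerivAt_iff_tendsto_slope] at hd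
    have hsub : Iio β ⊆ {β}ᶜ := fun x hx => ne_of_lt hx
    have hd2 : Filter.Tendsto (slope P β) (nhdsWithin β (Iio β)) (nhds (deriv P β)) :=
      hd.mono_left (nhdsWithin_mono β hsub)
    apply le_of_tendsto hd2
    filter_upwards [Ioo_mem_nhdsLT hβ0] with x hx
    have hPx := hpos x hx
    have : slope P β x = P x / (x - β) := by
      simp [slope_def_field, hβ]
    rw [this]
    apply div_nonpos_of_nonneg_of_nonpos (le_of_lt hPx)
    linarith [hx.2]
  have hWβ : W β ≤ 0 := by
    simp only [hWdef, hβ, zero_mul, sub_zero]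
    exact mul_nonpos_of_nonpos_of_nonneg hdPβ hsinβ
  -- find a point t₀ in (0, β) with cos t₀ ≠ 0
  obtain ⟨t₀, ht₀, hcos₀⟩ : ∃ t₀ ∈ Ioo 0 β, Real.cos t₀ ≠ 0 := by
    set ε := min β π / 4 with hε
    have hε0 : 0 < ε := by positivity
    have hεβ : 2 * ε < β := by
      have : min β π ≤ β := min_le_left _ _
      nlinarith
    have hεπ : ε < π := by
      have : min β π ≤ π := min_le_right _ _
      nlinarith
    by_contra hcon
    push_neg at hcon
    have h1 : Real.cos ε = 0 := hcon ε ⟨hε0, by linarith⟩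
    have h2 : Real.cos (2 * ε) = 0 := hcon (2 * ε) ⟨by linarith, hεβ⟩
    rw [Real.cos_eq_zero_iff] at h1 h2
    obtain ⟨k, hk⟩ := h1
    obtain ⟨m, hm⟩ := h2
    have hdiff : ε = ((m:ℝ) - (k:ℝ)) * π := by linear_combination hm - hk
    have h01 : (0:ℝ) < (m:ℝ) - (k:ℝ) := by nlinarith
    have h02 : (m:ℝ) - (k:ℝ) < 1 := by nlinarith
    have hZ : (0:ℤ) < m - k := by exact_mod_cast (by push_cast; linarith : (0:ℝ) < ((m-k:ℤ):ℝ))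
    have hZ2 : m - k < 1 := by exact_mod_cast (by push_cast; linarith : ((m-k:ℤ):ℝ) < 1)
    omega
  -- find a small interval around t₀ inside (0,β) where cos ≠ 0
  have hopen : IsOpen (Ioo 0 β ∩ {x | Real.cos x ≠ 0}) :=
    isOpen_Ioo.inter (isOpen_compl_iff.mpr (isClosed_singleton.preimage Real.continuous_cos))
  obtain ⟨δ, hδ0, hball⟩ := Metric.isOpen_iff.mp hopen t₀ ⟨ht₀, hcos₀⟩
  set a₁ := t₀ - δ / 2 with ha₁
  set b₁ := t₀ + δ / 2 with hb₁
  have hsubU : Icc a₁ b₁ ⊆ Ioo 0 β ∩ {x | Real.cos x ≠ 0} := by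
    intro x hx
    apply hball
    rw [Real.ball_eq_Ioo]
    constructor <;> [skip; skip] <;> simp only [ha₁, hb₁] at hx ⊢ <;>
      [linarith [hx.1]; linarith [hx.2]]
  have hab : a₁ < b₁ := by simp only [ha₁, hb₁]; linarith
  -- continuity of D
  have hDcont : Continuous D := by
    apply Continuous.mul
    · exact (continuous_const.mul (Real.continuous_cos.pow 2))
    · exact hP.continuous.mul (Real.continuous_sin.comp (continuous_const.mul continuous_id))
  -- strict increase from a₁ to b₁
  have hint : ∫ x in a₁..b₁, D x = W b₁ - W a₁ := by
    apply intervalIntegral.integral_eq_sub_of_hasDerivAt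
    · intro x hx
      exact hW' x
    · exact hDcont.intervalIntegrable a₁ b₁
  have hintpos : 0 < ∫ x in a₁..b₁, D x := by
    apply intervalIntegral.intervalIntegral_pos_of_pos_on (hDcont.intervalIntegrable a₁ b₁) _ hab
    intro x hx
    have hxU := hsubU (Ioo_subset_Icc_self hx)
    have hPx := hpos x hxU.1
    have hsinx := hsinpos x hxU.1
    have hcosx : Real.cos x ≠ 0 := hxU.2
    simp only [hDdef]
    have h4 : (0:ℝ) < 4 * h ^ 2 * Real.cos x ^ 2 := by positivity
    positivity
  have ha₁mem : a₁ ∈ Icc 0 β := by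
    have := (hsubU (left_mem_Icc.mpr (le_of_lt hab))).1
    exact ⟨le_of_lt this.1, le_of_lt this.2⟩
  have hb₁mem : b₁ ∈ Icc 0 β := by
    have := (hsubU (right_mem_Icc.mpr (le_of_lt hab))).1
    exact ⟨le_of_lt this.1, le_of_lt this.2⟩
  have c1 : W 0 ≤ W a₁ := hWmono (left_mem_Icc.mpr (by linarith [hβ0])) ha₁mem ha₁mem.1
  have c2 : W b₁ ≤ W β := hWmono hb₁mem (right_mem_Icc.mpr (by linarith [hβ0])) hb₁mem.2
  linarith [hintpos, hint, c1, c2, hW0, hWβ]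

/-- the zeros of a solution of the angular equation of the elliptic
membrane vanishing at `0` are strictly larger than those of `sin (g α)`. -/
theorem zeros_of_angular_equation_larger_than_sin
    (g h : ℝ) (hg : 0 < g) (hh : h ≠ 0) (P : ℝ → ℝ)
    (hP : Differentiable ℝ P) (hP' : Differentiable ℝ (deriv P))
    (hPne : P ≠ fun _ => 0)
    (hode : ∀ α : ℝ,
      deriv (deriv P) α + (g ^ 2 - 4 * h ^ 2 * Real.cos α ^ 2) * P α = 0)
    (h0 : P 0 = 0) :
    ∀ α ∈ Set.Ioc (0 : ℝ) (π / g), P α ≠ 0 := by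
  intro α hα hPα
  -- at every zero of P, the derivative is nonzero
  have hder : ∀ c, P c = 0 → deriv P c ≠ 0 := by
    intro c hc hc'
    exact hPne (funext (angular_uniq g h P hP hP' hode c hc hc'))
  -- no zeros of P immediately to the right of 0
  have hd0 : deriv P 0 ≠ 0 := hder 0 h0
  have hev : ∀ᶠ z in nhdsWithin 0 {(0:ℝ)}ᶜ, P z ≠ P 0 := ((hP 0).hasDerivAt).eventually_ne hd0
  have hev' : ∀ᶠ z in nhdsWithin 0 (Ioi 0), P z ≠ 0 := by
    rw [h0] at hev
    exact hev.filter_mono (nhdsWithin_mono 0 (fun x hx => ne_of_gt hx))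
  obtain ⟨u, hu, huP⟩ := mem_nhdsGT_iff_exists_Ioo_subset.mp hev'
  have hu0 : (0:ℝ) < u := hu
  -- the zero set in (0, π/g]
  set Z : Set ℝ := P ⁻¹' {0} ∩ Icc (min u α) (π / g) with hZ
  have hπg : 0 < π / g := div_pos Real.pi_pos hg
  have hαZ : α ∈ Z := by
    refine ⟨hPα, ⟨min_le_right u α, hα.2⟩⟩
  have hZclosed : IsClosed Z := (isClosed_singleton.preimage hP.continuous).inter isClosed_Icc
  have hZbdd : BddBelow Z := ⟨min u α, fun z hz => hz.2.1⟩
  set β := sInf Z with hβdef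
  have hβZ : β ∈ Z := hZclosed.csInf_mem ⟨α, hαZ⟩ hZbdd
  have huα : 0 < min u α := lt_min hu0 hα.1
  have hβ0 : 0 < β := lt_of_lt_of_le huα hβZ.2.1
  have hβπ : β ≤ π / g := hβZ.2.2
  have hβP : P β = 0 := hβZ.1
  -- no zeros in (0, β)
  have hnz : ∀ x ∈ Ioo 0 β, P x ≠ 0 := by
    intro x hx hPx
    rcases lt_or_ge x u with hxu | hxu
    · exact huP ⟨hx.1, hxu⟩ hPx
    · have hxZ : x ∈ Z := ⟨hPx, ⟨le_trans (min_le_left u α) hxu, le_trans (le_of_lt hx.2) hβπ⟩⟩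
      exact absurd (csInf_le hZbdd hxZ) (not_le.mpr hx.2)
  -- P has constant sign on (0, β); get a contradiction in either case
  have hmid : β / 2 ∈ Ioo 0 β := ⟨by linarith, by linarith⟩
  have hsign : (∀ x ∈ Ioo 0 β, 0 < P x) ∨ (∀ x ∈ Ioo 0 β, P x < 0) := by
    rcases lt_trichotomy (P (β / 2)) 0 with hm | hm | hm
    · right
      intro x hx
      rcases lt_trichotomy (P x) 0 with hx' | hx' | hx'
      · exact hx'
      · exact absurd hx' (hnz x hx)
      · exfalso
        have hcont : ContinuousOn P (uIcc x (β / 2)) := hP.continuous.continuousOn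
        have h0mem : (0:ℝ) ∈ uIcc (P x) (P (β / 2)) := by
          rw [mem_uIcc]; right; exact ⟨le_of_lt hm, le_of_lt hx'⟩
        obtain ⟨c, hc, hPc⟩ := intermediate_value_uIcc hcont h0mem
        have hcIoo : c ∈ Ioo 0 β := by
          rcases mem_uIcc.mp hc with ⟨h1, h2⟩ | ⟨h1, h2⟩
          · exact ⟨lt_of_lt_of_le hx.1 h1, lt_of_le_of_lt h2 hmid.2⟩
          · exact ⟨lt_of_lt_of_le hmid.1 h1, lt_of_le_of_lt h2 hx.2⟩
        exact hnz c hcIoo hPc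
    · exact absurd hm (hnz _ hmid)
    · left
      intro x hx
      rcases lt_trichotomy (P x) 0 with hx' | hx' | hx'
      · exfalso
        have hcont : ContinuousOn P (uIcc x (β / 2)) := hP.continuous.continuousOn
        have h0mem : (0:ℝ) ∈ uIcc (P x) (P (β / 2)) := by
          rw [mem_uIcc]; left; exact ⟨le_of_lt hx', le_of_lt hm⟩
        obtain ⟨c, hc, hPc⟩ := intermediate_value_uIcc hcont h0mem
        have hcIoo : c ∈ Ioo 0 β := by
          rcases mem_uIcc.mp hc with ⟨h1, h2⟩ | ⟨h1, h2⟩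
          · exact ⟨lt_of_lt_of_le hx.1 h1, lt_of_le_of_lt h2 hmid.2⟩
          · exact ⟨lt_of_lt_of_le hmid.1 h1, lt_of_le_of_lt h2 hx.2⟩
        exact hnz c hcIoo hPc
      · exact absurd hx' (hnz x hx)
      · exact hx'
  rcases hsign with hsign | hsign
  · exact angular_key g h hg hh P hP hP' hode β hβ0 hβπ hsign h0 hβP
  · -- apply the key lemma to -P
    set Q : ℝ → ℝ := fun x => -P x with hQ
    have hQdiff : Differentiable ℝ Q := hP.neg
    have hQd : deriv Q = fun x => -deriv P x := by
      funext x
      simp [hQ, deriv.neg]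
    have hQd' : Differentiable ℝ (deriv Q) := by rw [hQd]; exact hP'.neg
    have hQode : ∀ x : ℝ,
        deriv (deriv Q) x + (g ^ 2 - 4 * h ^ 2 * Real.cos x ^ 2) * Q x = 0 := by
      intro x
      have : deriv (deriv Q) x = -deriv (deriv P) x := by
        rw [hQd]
        exact deriv.neg
      rw [this]
      have := hode x
      simp only [hQ]
      linarith
    have hQpos : ∀ x ∈ Ioo 0 β, 0 < Q x := by
      intro x hx
      simp only [hQ]
      linarith [hsign x hx]
    exact angular_key g h hg hh Q hQdiff hQd' hQode β hβ0 hβπ hQpos (by simp [hQ, h0])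
      (by simp [hQ, hβP])
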